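/- Let Ω₀ be a finite set, P₀ a probability on P(Ω₀) with P₀({ω}) > 0 for all ω, and let b ⊆ Ω₀ with ∅ ≠ b ≠ Ω₀. Define Ω₁ = (b × (Ω₀∖b)) ∪ ((Ω₀∖b) × b), and define μ : P(Ω₀) → P(Ω₁) by μ(A) = ((A∩b) × (Ω₀∖b)) ∪ ((A∩(Ω₀∖b)) × b), and P₁ on Ω₁ by P₁((ω,ω')) = P₀(ω)P₀(ω')/P₀(Ω₀∖b) if (ω,ω') ∈ b × (Ω₀∖b), and P₁((ω',ω)) = P₀(ω)P₀(ω')/P₀(b) if (ω',ω) ∈ (Ω₀∖b) × b. Then (i) μ is an injective Boolean morphism (μ(A∩B)=μ(A)∩μ(B), μ(Ω₀∖A)=Ω₁∖μ(A)), and (ii) P₁(μ(A)) = P₀(A) for all A ⊆ Ω₀. -/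
import Mathlib


open scoped BigOperators

/-- Probability of a subset of a finite type, from atom probabilities `p`. -/
noncomputable def P0 {Ω : Type*} [Fintype Ω] (p : Ω → ℝ) (A : Set Ω) : ℝ :=
  ∑ ω, A.indicator p ω

/-- The embedding `μ(A) = ((A∩b) × (Ω∖b)) ∪ ((A∩(Ω∖b)) × b)`. -/
def mu {Ω : Type*} (b : Set Ω) (A : Set Ω) : Set (Ω × Ω) :=
  ((A ∩ b) ×ˢ bᶜ) ∪ ((A ∩ bᶜ) ×ˢ b)

/-- Atom weights on `Ω × Ω`: `p ω · p ω' / P₀(Ω∖b)` on `b × (Ω∖b)` and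
`p ω' · p ω / P₀(b)` on `(Ω∖b) × b`, `0` elsewhere. -/
noncomputable def q1 {Ω : Type*} [Fintype Ω] (p : Ω → ℝ) (b : Set Ω)
    (x : Ω × Ω) : ℝ :=
  (b ×ˢ bᶜ).indicator (fun y => p y.1 * p y.2 / P0 p bᶜ) x +
    (bᶜ ×ˢ b).indicator (fun y => p y.1 * p y.2 / P0 p b) x

/-- The extended probability on subsets of `Ω × Ω`. -/
noncomputable def P1 {Ω : Type*} [Fintype Ω] (p : Ω → ℝ) (b : Set Ω)
    (S : Set (Ω × Ω)) : ℝ :=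
  ∑ x, S.indicator (q1 p b) x

lemma mem_mu {Ω : Type*} (b A : Set Ω) (x y : Ω) :
    (x, y) ∈ mu b A ↔ (x ∈ A ∧ x ∈ b ∧ y ∉ b) ∨ (x ∈ A ∧ x ∉ b ∧ y ∈ b) := by
  simp [mu, Set.mem_prod, and_assoc]

/-- One step of the free conditional model construction: `μ` is an injective
Boolean morphism and the extended probability `P₁` satisfies `P₁(μ(A)) = P₀(A)`. -/
theorem mu_injective_morphism_and_prob_ext {Ω : Type*} [Fintype Ω]
    (p : Ω → ℝ) (hpos : ∀ ω, 0 < p ω) (hsum : ∑ ω, p ω = 1)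
    (b : Set Ω) (hb : b ≠ ∅) (hb' : b ≠ Set.univ) :
    Function.Injective (mu b) ∧
    (∀ A B : Set Ω, mu b (A ∩ B) = mu b A ∩ mu b B) ∧
    (∀ A : Set Ω, mu b Aᶜ = mu b Set.univ \ mu b A) ∧
    (∀ A : Set Ω, P1 p b (mu b A) = P0 p A) := by
  classical
  obtain ⟨ω₀, hω₀⟩ : b.Nonempty := Set.nonempty_iff_ne_empty.2 hb
  obtain ⟨ω₁, hω₁⟩ : bᶜ.Nonempty := Set.nonempty_compl.2 hb'
  have hnn : ∀ (s : Set Ω) (ω : Ω), 0 ≤ s.indicator p ω :=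
    fun s ω => Set.indicator_nonneg (fun ω _ => (hpos ω).le) ω
  have hPb : 0 < P0 p b := by
    refine Finset.sum_pos' (fun ω _ => hnn b ω) ⟨ω₀, Finset.mem_univ _, ?_⟩
    simpa [Set.indicator_of_mem hω₀] using hpos ω₀
  have hPbc : 0 < P0 p bᶜ := by
    refine Finset.sum_pos' (fun ω _ => hnn bᶜ ω) ⟨ω₁, Finset.mem_univ _, ?_⟩
    simpa [Set.indicator_of_mem hω₁] using hpos ω₁
  have hsub : ∀ A B : Set Ω, mu b A = mu b B → A ⊆ B := by
    intro A B h ω hA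
    by_cases hωb : ω ∈ b
    · have : (ω, ω₁) ∈ mu b A := (mem_mu b A ω ω₁).2 (Or.inl ⟨hA, hωb, hω₁⟩)
      rw [h, mem_mu] at this
      rcases this with ⟨h1, _⟩ | ⟨_, _, h2⟩
      · exact h1
      · exact absurd h2 hω₁
    · have : (ω, ω₀) ∈ mu b A := (mem_mu b A ω ω₀).2 (Or.inr ⟨hA, hωb, hω₀⟩)
      rw [h, mem_mu] at this
      rcases this with ⟨_, _, h2⟩ | ⟨h1, _⟩
      · exact absurd hω₀ h2
      · exact h1
  refine ⟨fun A B h => Set.Subset.antisymm (hsub A B h) (hsub B A h.symm), ?_, ?_, ?_⟩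
  · intro A B
    ext ⟨x, y⟩
    simp only [mem_mu, Set.mem_inter_iff]
    tauto
  · intro A
    ext ⟨x, y⟩
    simp only [mem_mu, Set.mem_diff, Set.mem_compl_iff, Set.mem_univ, true_and]
    tauto
  · intro A
    have key : ∀ x y : Ω, (mu b A).indicator (q1 p b) (x, y) =
        (A ∩ b).indicator p x * bᶜ.indicator p y / P0 p bᶜ +
        (A ∩ bᶜ).indicator p x * b.indicator p y / P0 p b := by
      intro x y
      simp only [Set.indicator_apply, q1, mem_mu, Set.mem_prod, Set.mem_inter_iff,
        Set.mem_compl_iff]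
      by_cases hxA : x ∈ A <;> by_cases hxb : x ∈ b <;> by_cases hyb : y ∈ b <;>
        simp [hxA, hxb, hyb]
    have step : P1 p b (mu b A) =
        (∑ x, (A ∩ b).indicator p x) * (∑ y, bᶜ.indicator p y) / P0 p bᶜ +
        (∑ x, (A ∩ bᶜ).indicator p x) * (∑ y, b.indicator p y) / P0 p b := by
      rw [P1, Fintype.sum_prod_type]
      simp only [key]
      rw [Finset.sum_comm]
      simp only [Finset.sum_add_distrib]
      congr 1 <;>
        simp only [mul_div_assoc, ← Finset.sum_mul, ← Finset.mul_sum, ← Finset.sum_div]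
    rw [step]
    have e1 : (∑ y, bᶜ.indicator p y) = P0 p bᶜ := rfl
    have e2 : (∑ y, b.indicator p y) = P0 p b := rfl
    rw [e1, e2, mul_div_assoc, div_self hPbc.ne', mul_div_assoc, div_self hPb.ne',
      mul_one, mul_one, P0, ← Finset.sum_add_distrib]
    congr 1; ext x
    by_cases hxA : x ∈ A <;> by_cases hxb : x ∈ b <;>
      simp [Set.indicator_apply, hxA, hxb]
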